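/- On a Kenmotsu manifold of dimension 2n+1, the *-Ricci tensor is given by S*(X,Y) = S(X,Y) + (2n-1) g(X,Y) + η(X)η(Y) for all vector fields X, Y. -/
import Mathlib


/-- An abstract algebraic model of a `(2n+1)`-dimensional Kenmotsu manifold:
`C` plays the role of the ring of smooth functions on the manifold and vector
fields are modelled as `ℝ`-derivations of `C`.  A global orthonormal frame `e`
is included in order to express traces (Ricci tensor, scalar curvature). -/
structure KenmotsuManifold (n : ℕ) (C : Type*) [CommRing C] [Algebra ℝ C] where
  /-- the Riemannian metric -/
  g : Derivation ℝ C C → Derivation ℝ C C → C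
  /-- the structure `(1,1)`-tensor field -/
  φ : Derivation ℝ C C → Derivation ℝ C C
  /-- the Reeb (characteristic) vector field -/
  ξ : Derivation ℝ C C
  /-- the contact `1`-form -/
  η : Derivation ℝ C C → C
  /-- the Levi-Civita connection -/
  nabla : Derivation ℝ C C → Derivation ℝ C C → Derivation ℝ C C
  /-- a global orthonormal frame, used to take traces -/
  e : Fin (2 * n + 1) → Derivation ℝ C C
  g_symm : ∀ X Y, g X Y = g Y X
  g_add_left : ∀ X Y Z, g (X + Y) Z = g X Z + g Y Z
  g_smul_left : ∀ (f : C) (X Y), g (f • X) Y = f * g X Y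
  g_nondeg : ∀ X, (∀ Y, g X Y = 0) → X = 0
  g_frame : ∀ i j, g (e i) (e j) = if i = j then 1 else 0
  frame_span : ∀ X : Derivation ℝ C C, X = ∑ i, g X (e i) • e i
  phi_phi : ∀ X, φ (φ X) = -X + η X • ξ
  phi_linear : ∀ (f : C) (X Y), φ (f • X + Y) = f • φ X + φ Y
  eta_xi : η ξ = 1
  eta_def : ∀ X, η X = g X ξ
  compat_phi : ∀ X Y, g (φ X) (φ Y) = g X Y - η X * η Y
  nabla_add_left : ∀ X Y Z, nabla (X + Y) Z = nabla X Z + nabla Y Z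
  nabla_smul_left : ∀ (f : C) (X Y), nabla (f • X) Y = f • nabla X Y
  nabla_add_right : ∀ X Y Z, nabla X (Y + Z) = nabla X Y + nabla X Z
  nabla_leibniz : ∀ (X) (f : C) (Y), nabla X (f • Y) = X f • Y + f • nabla X Y
  torsion_free : ∀ X Y, nabla X Y - nabla Y X = ⁅X, Y⁆
  metric_compat : ∀ X Y Z, X (g Y Z) = g (nabla X Y) Z + g Y (nabla X Z)
  /-- the Kenmotsu condition `(∇_X φ)Y = g(φX,Y)ξ - η(Y)φX` -/
  kenmotsu : ∀ X Y, nabla X (φ Y) - φ (nabla X Y) = g (φ X) Y • ξ - η Y • φ X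

namespace KenmotsuManifold

variable {n : ℕ} {C : Type*} [CommRing C] [Algebra ℝ C] (K : KenmotsuManifold n C)

/-- the Riemann curvature tensor `R(X,Y)Z = ∇_X∇_Y Z - ∇_Y∇_X Z - ∇_{[X,Y]}Z` -/
def Rm (X Y Z : Derivation ℝ C C) : Derivation ℝ C C :=
  K.nabla X (K.nabla Y Z) - K.nabla Y (K.nabla X Z) - K.nabla ⁅X, Y⁆ Z

/-- the Ricci tensor `S(X,Y) = trace (Z ↦ R(Z,X)Y)` -/
def S (X Y : Derivation ℝ C C) : C := ∑ i, K.g (K.Rm (K.e i) X Y) (K.e i)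

/-- the Ricci operator `Q`, `g(QX,Y) = S(X,Y)` -/
def Q (X : Derivation ℝ C C) : Derivation ℝ C C := ∑ i, K.S X (K.e i) • K.e i

/-- the scalar curvature `r` -/
def r : C := ∑ i, K.S (K.e i) (K.e i)

/-- the `*`-Ricci tensor `S*(X,Y) = (1/2) trace (Z ↦ R(X,φY)φZ)` -/
noncomputable def Sstar (X Y : Derivation ℝ C C) : C :=
  (2 : ℝ)⁻¹ • ∑ i, K.g (K.Rm X (K.φ Y) (K.φ (K.e i))) (K.e i)

/-- the covariant derivative `(∇_X Q)Y` of the Ricci operator -/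
def nablaQ (X Y : Derivation ℝ C C) : Derivation ℝ C C :=
  K.nabla X (K.Q Y) - K.Q (K.nabla X Y)

/-- the Lie derivative `(£_V g)(X,Y)` of the metric -/
def lieG (V X Y : Derivation ℝ C C) : C :=
  V (K.g X Y) - K.g ⁅V, X⁆ Y - K.g X ⁅V, Y⁆

/-- the Lie derivative `(£_V S)(X,Y)` of the Ricci tensor -/
def lieS (V X Y : Derivation ℝ C C) : C :=
  V (K.S X Y) - K.S ⁅V, X⁆ Y - K.S X ⁅V, Y⁆

/-- `g` is a `*`-Ricci soliton with potential vector field `V` and soliton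
constant `l`: `£_V g + 2S* + 2l g = 0`. -/
def IsStarRicciSoliton (V : Derivation ℝ C C) (l : ℝ) : Prop :=
  ∀ X Y, K.lieG V X Y + 2 * K.Sstar X Y + (2 * l) • K.g X Y = 0

/-- `g` is a gradient almost `*`-Ricci soliton with potential function `f`
(with gradient `F`, i.e. `g(F,X) = Xf`) and soliton function `l`:
`Hess f + S* + l g = 0`. -/
def IsGradAlmostStarRicciSoliton (f : C) (F : Derivation ℝ C C) (l : C) : Prop :=
  (∀ X, K.g F X = X f) ∧ ∀ X Y, K.g (K.nabla X F) Y + K.Sstar X Y + l * K.g X Y = 0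

/-- `M` is `η`-Einstein: `S = α g + β η⊗η`. -/
def IsEtaEinstein : Prop :=
  ∃ α β : C, ∀ X Y, K.S X Y = α * K.g X Y + β * (K.η X * K.η Y)

end KenmotsuManifold
namespace KenmotsuManifold

variable {n : ℕ} {C : Type*} [CommRing C] [Algebra ℝ C] (K : KenmotsuManifold n C)

lemma half_zero {a : C} (h : a + a = 0) : a = 0 := by
  have h2 : (2:ℝ) • a = 0 := by rw [two_smul]; exact h
  calc a = (2:ℝ)⁻¹ • ((2:ℝ) • a) := by rw [smul_smul]; norm_num
  _ = 0 := by rw [h2, smul_zero]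

section Basics
variable (X Y Z W : Derivation ℝ C C) (f : C)

lemma g_add_right : K.g X (Y + Z) = K.g X Y + K.g X Z := by
  rw [K.g_symm, K.g_add_left, K.g_symm Y, K.g_symm Z]

lemma g_smul_right : K.g X (f • Y) = f * K.g X Y := by
  rw [K.g_symm, K.g_smul_left, K.g_symm]

lemma g_zero_left : K.g 0 Y = 0 := by
  have := K.g_smul_left 0 Y Y
  simpa using this

lemma g_zero_right : K.g X 0 = 0 := by rw [K.g_symm]; exact K.g_zero_left X

lemma g_neg_left : K.g (-X) Y = -K.g X Y := by
  have := K.g_smul_left (-1) X Y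
  simpa using this

lemma g_neg_right : K.g X (-Y) = -K.g X Y := by
  rw [K.g_symm, g_neg_left, K.g_symm]

lemma g_sub_left : K.g (X - Y) Z = K.g X Z - K.g Y Z := by
  rw [sub_eq_add_neg, K.g_add_left, g_neg_left, sub_eq_add_neg]

lemma g_sub_right : K.g X (Y - Z) = K.g X Y - K.g X Z := by
  rw [K.g_symm, g_sub_left, K.g_symm Y, K.g_symm Z]

/-- `g X ·` as a `C`-linear map -/
def gL (X : Derivation ℝ C C) : Derivation ℝ C C →ₗ[C] C where
  toFun Y := K.g X Y
  map_add' Y Z := K.g_add_right X Y Z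
  map_smul' f Y := K.g_smul_right X Y f

@[simp] lemma gL_apply : K.gL X Y = K.g X Y := rfl

lemma phi_add : K.φ (X + Y) = K.φ X + K.φ Y := by
  have := K.phi_linear 1 X Y
  simpa using this

lemma phi_smul : K.φ (f • X) = f • K.φ X := by
  have h0 : K.φ 0 = 0 := by
    have := K.phi_linear 1 0 0
    simpa using this.symm
  have := K.phi_linear f X 0
  simpa [h0] using this

/-- `φ` as a `C`-linear map -/
def phiL : Derivation ℝ C C →ₗ[C] Derivation ℝ C C where
  toFun := K.φ
  map_add' := K.phi_add
  map_smul' f X := K.phi_smul X f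

@[simp] lemma phiL_apply : K.phiL X = K.φ X := rfl

lemma phi_zero : K.φ 0 = 0 := map_zero K.phiL
lemma phi_neg : K.φ (-X) = -K.φ X := map_neg K.phiL X
lemma phi_sub : K.φ (X - Y) = K.φ X - K.φ Y := map_sub K.phiL X Y

lemma eta_add : K.η (X + Y) = K.η X + K.η Y := by
  rw [K.eta_def, K.eta_def, K.eta_def, K.g_add_left]

lemma eta_smul : K.η (f • X) = f * K.η X := by
  rw [K.eta_def, K.eta_def, K.g_smul_left]

/-- `η` as a `C`-linear map -/
def etaL : Derivation ℝ C C →ₗ[C] C where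
  toFun := K.η
  map_add' := K.eta_add
  map_smul' f X := K.eta_smul X f

@[simp] lemma etaL_apply : K.etaL X = K.η X := rfl

lemma eta_zero : K.η 0 = 0 := map_zero K.etaL
lemma eta_neg : K.η (-X) = -K.η X := map_neg K.etaL X
lemma eta_sub : K.η (X - Y) = K.η X - K.η Y := map_sub K.etaL X Y

lemma g_xi_xi : K.g K.ξ K.ξ = 1 := by rw [← K.eta_def, K.eta_xi]
lemma g_xi_right : K.g X K.ξ = K.η X := (K.eta_def X).symm
lemma g_xi_left : K.g K.ξ X = K.η X := by rw [K.g_symm]; exact K.g_xi_right X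

lemma nabla_zero_right : K.nabla X 0 = 0 := by
  have := K.nabla_leibniz X 0 0
  simpa using this

lemma nabla_smul_right : K.nabla X (f • Y) = X f • Y + f • K.nabla X Y := K.nabla_leibniz X f Y

lemma nabla_neg_right : K.nabla X (-Y) = -K.nabla X Y := by
  have := K.nabla_leibniz X (-1) Y
  simpa using this

lemma nabla_sub_right : K.nabla X (Y - Z) = K.nabla X Y - K.nabla X Z := by
  rw [sub_eq_add_neg, K.nabla_add_right, nabla_neg_right, sub_eq_add_neg]

lemma nabla_zero_left : K.nabla 0 Y = 0 := by
  have := K.nabla_smul_left 0 Y Y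
  simpa using this

lemma nabla_neg_left : K.nabla (-X) Y = -K.nabla X Y := by
  have := K.nabla_smul_left (-1) X Y
  simpa using this

lemma nabla_sub_left : K.nabla (X - Y) Z = K.nabla X Z - K.nabla Y Z := by
  rw [sub_eq_add_neg, K.nabla_add_left, nabla_neg_left, sub_eq_add_neg]

lemma bracket_smul_left : ⁅f • X, Y⁆ = f • ⁅X, Y⁆ - Y f • X := by
  ext a
  simp only [Derivation.commutator_apply, Derivation.sub_apply, Derivation.smul_apply,
    smul_eq_mul, Derivation.leibniz]
  ring

lemma bracket_smul_right : ⁅X, f • Y⁆ = f • ⁅X, Y⁆ + X f • Y := by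
  ext a
  simp only [Derivation.commutator_apply, Derivation.add_apply, Derivation.smul_apply,
    smul_eq_mul, Derivation.leibniz]
  ring

end Basics
end KenmotsuManifold
namespace KenmotsuManifold

variable {n : ℕ} {C : Type*} [CommRing C] [Algebra ℝ C] (K : KenmotsuManifold n C)

section CLemmas
variable (X Y Z W : Derivation ℝ C C) (f : C)

/-- the nilpotent scalar `c = η(φξ)` -/
def cst : C := K.η (K.φ K.ξ)

lemma cst_def : K.cst = K.η (K.φ K.ξ) := rfl

lemma g_sum_right {ι : Type*} (s : Finset ι) (F : ι → Derivation ℝ C C) :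
    K.g X (∑ i ∈ s, F i) = ∑ i ∈ s, K.g X (F i) :=
  map_sum (K.gL X) F s

lemma g_sum_left {ι : Type*} (s : Finset ι) (F : ι → Derivation ℝ C C) :
    K.g (∑ i ∈ s, F i) X = ∑ i ∈ s, K.g (F i) X := by
  rw [K.g_symm, K.g_sum_right]
  exact Finset.sum_congr rfl fun i _ => K.g_symm X (F i)

lemma phi_sum {ι : Type*} (s : Finset ι) (F : ι → Derivation ℝ C C) :
    K.φ (∑ i ∈ s, F i) = ∑ i ∈ s, K.φ (F i) :=
  map_sum K.phiL F s

lemma eta_sum {ι : Type*} (s : Finset ι) (F : ι → Derivation ℝ C C) :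
    K.η (∑ i ∈ s, F i) = ∑ i ∈ s, K.η (F i) :=
  map_sum K.etaL F s

lemma sum_coeff (A : Derivation ℝ C C) (F : Derivation ℝ C C →ₗ[C] C) :
    ∑ i, K.g A (K.e i) * F (K.e i) = F A := by
  conv_rhs => rw [K.frame_span A, map_sum]
  simp [smul_eq_mul]

lemma sum_coeff_v (A : Derivation ℝ C C) (F : Derivation ℝ C C →ₗ[C] Derivation ℝ C C) :
    ∑ i, K.g A (K.e i) • F (K.e i) = F A := by
  conv_rhs => rw [K.frame_span A, map_sum]
  simp

lemma sum_gg (A B : Derivation ℝ C C) :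
    ∑ i, K.g A (K.e i) * K.g B (K.e i) = K.g A B := by
  have := K.sum_coeff A (K.gL B)
  simpa [K.g_symm B A] using this

lemma phiphixi : K.φ (K.φ K.ξ) = 0 := by
  rw [K.phi_phi, K.eta_xi, one_smul, neg_add_cancel]

lemma phixi : K.φ K.ξ = K.cst • K.ξ := by
  have h := K.phi_phi (K.φ K.ξ)
  rw [K.phiphixi, K.phi_zero, ← K.cst_def] at h
  calc K.φ K.ξ = K.φ K.ξ + 0 := by rw [add_zero]
  _ = K.φ K.ξ + (-K.φ K.ξ + K.cst • K.ξ) := by rw [← h]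
  _ = K.cst • K.ξ := by abel

lemma star : K.g (K.φ X) Y + K.g X (K.φ Y)
    = K.η Y * K.η (K.φ X) + K.η X * K.η (K.φ Y) := by
  have h1 := K.compat_phi X (K.φ Y)
  have h2 : K.φ (K.φ Y) = -Y + K.η Y • K.ξ := K.phi_phi Y
  rw [h2, K.g_add_right, K.g_neg_right, K.g_smul_right, K.g_xi_right] at h1
  linear_combination -h1

lemma h_phi : K.η (K.φ (K.φ X)) = 0 := by
  rw [K.phi_phi, K.eta_add, K.eta_neg, K.eta_smul, K.eta_xi]; ring

lemma h_sq : K.η (K.φ X) * K.η (K.φ X) = 0 := by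
  have h1 := K.star X (K.φ X)
  have h2 := K.compat_phi X X
  have h3 : K.g X (K.φ (K.φ X)) = -K.g X X + K.η X * K.η X := by
    rw [K.phi_phi, K.g_add_right, K.g_neg_right, K.g_smul_right, K.g_xi_right]
  rw [h3, K.h_phi] at h1
  linear_combination h2 - h1

lemma h_mul : K.η (K.φ X) * K.η (K.φ Y) = 0 := by
  have h1 := K.h_sq (X + Y)
  rw [K.phi_add, K.eta_add] at h1
  apply half_zero
  linear_combination h1 - K.h_sq X - K.h_sq Y

/-- the metric dual of `η ∘ φ` -/
def Hv : Derivation ℝ C C := ∑ i, K.η (K.φ (K.e i)) • K.e i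

lemma g_Hv : K.g K.Hv W = K.η (K.φ W) := by
  have h1 : K.g K.Hv W = ∑ i, K.g W (K.e i) * K.η (K.φ (K.e i)) := by
    rw [K.g_symm, Hv, K.g_sum_right]
    exact Finset.sum_congr rfl fun i _ => by rw [K.g_smul_right]; ring
  have h2 := K.sum_coeff W (K.etaL.comp K.phiL)
  simp only [LinearMap.comp_apply, phiL_apply, etaL_apply] at h2
  rw [h1, h2]

lemma phiHv : K.φ K.Hv = 0 := by
  apply K.g_nondeg
  intro W
  have h1 := K.star K.Hv W
  have h2 : K.g K.Hv (K.φ W) = 0 := by rw [K.g_Hv, K.h_phi]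
  have h3 : K.η (K.φ K.Hv) = 0 := by
    have he : K.η (K.φ K.Hv) = ∑ i, K.η (K.φ (K.e i)) * K.η (K.φ (K.e i)) := by
      rw [Hv, K.phi_sum, K.eta_sum]
      exact Finset.sum_congr rfl fun i _ => by rw [K.phi_smul, K.eta_smul]
    rw [he]
    exact Finset.sum_eq_zero fun i _ => K.h_sq (K.e i)
  have h4 : K.η K.Hv = K.cst := by
    rw [K.eta_def, K.g_Hv, cst_def]
  have h5 : K.cst * K.η (K.φ W) = 0 := K.h_mul K.ξ W
  rw [h2, h3, h4] at h1
  linear_combination h1 + h5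

lemma Hv_eq : K.Hv = K.cst • K.ξ := by
  have h := K.phi_phi K.Hv
  rw [K.phiHv, K.phi_zero] at h
  have h4 : K.η K.Hv = K.cst := by rw [K.eta_def, K.g_Hv, cst_def]
  rw [h4] at h
  calc K.Hv = K.Hv + 0 := by rw [add_zero]
  _ = K.Hv + (-K.Hv + K.cst • K.ξ) := by rw [← h]
  _ = K.cst • K.ξ := by abel

lemma eta_phi : K.η (K.φ X) = K.cst * K.η X := by
  rw [← K.g_Hv, K.Hv_eq, K.g_smul_left, K.g_xi_left]

lemma cst_sq : K.cst * K.cst = 0 := by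
  simpa [cst_def] using K.h_mul K.ξ K.ξ

lemma star2 : K.g (K.φ X) Y + K.g X (K.φ Y) = 2 * K.cst * K.η X * K.η Y := by
  have h := K.star X Y
  rw [K.eta_phi X, K.eta_phi Y] at h
  linear_combination h

end CLemmas
end KenmotsuManifold
namespace KenmotsuManifold

variable {n : ℕ} {C : Type*} [CommRing C] [Algebra ℝ C] (K : KenmotsuManifold n C)

section NablaXi
variable (X Y Z W : Derivation ℝ C C) (f : C)

lemma nabla_phi : K.nabla X (K.φ Y)
    = K.φ (K.nabla X Y) + K.g (K.φ X) Y • K.ξ - K.η Y • K.φ X := by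
  linear_combination (norm := module) K.kenmotsu X Y

lemma nabla_xi_g : K.g (K.nabla X K.ξ) K.ξ = 0 := by
  have h := K.metric_compat X K.ξ K.ξ
  rw [K.g_xi_xi, Derivation.map_one_eq_zero, K.g_symm K.ξ] at h
  exact half_zero h.symm

lemma eta_nabla_xi : K.η (K.nabla X K.ξ) = 0 := by
  rw [K.eta_def]; exact K.nabla_xi_g X

lemma nablaxi : K.nabla X K.ξ = X - K.η X • K.ξ - K.cst • K.φ X := by
  have hker : K.g (K.φ X) (K.φ K.ξ) = 0 := by
    rw [K.compat_phi, K.eta_xi, ← K.eta_def]; ring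
  have s2 : K.φ (K.nabla X (K.φ K.ξ)) = K.cst • K.φ X := by
    have h := K.kenmotsu X (K.φ K.ξ)
    rw [K.phiphixi, K.nabla_zero_right, hker, ← K.cst_def, zero_smul, zero_sub] at h
    have := congrArg Neg.neg h
    simpa using this
  have s3 : K.φ (K.nabla X K.ξ) = K.nabla X (K.φ K.ξ) - (K.cst * K.η X) • K.ξ + K.φ X := by
    have h := K.kenmotsu X K.ξ
    rw [K.eta_xi, one_smul, K.g_xi_right, K.eta_phi] at h
    linear_combination (norm := module) -h
  have s4 := congrArg K.φ s3
  rw [K.phi_phi (K.nabla X K.ξ), K.eta_nabla_xi, zero_smul, add_zero,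
    K.phi_add, K.phi_sub, s2, K.phi_smul, K.phixi, smul_smul, K.phi_phi X] at s4
  have hz : (K.cst * K.η X * K.cst) • K.ξ = (0:C) • K.ξ := by
    rw [show K.cst * K.η X * K.cst = K.η X * (K.cst * K.cst) by ring, K.cst_sq, mul_zero]
  rw [hz, zero_smul, sub_zero] at s4
  linear_combination (norm := module) -s4

lemma X_eta : X (K.η Y)
    = K.η (K.nabla X Y) + K.g X Y - K.η X * K.η Y - K.cst * K.g (K.φ X) Y := by
  have h := K.metric_compat X Y K.ξ
  rw [K.nablaxi X, K.g_sub_right, K.g_sub_right, K.g_smul_right, K.g_smul_right] at h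
  simp only [K.g_xi_right] at h
  linear_combination h - K.g_symm X Y + K.cst * K.g_symm (K.φ X) Y

lemma X_gphi : X (K.g (K.φ Y) Z)
    = K.g (K.φ (K.nabla X Y)) Z + K.g (K.φ X) Y * K.η Z - K.η Y * K.g (K.φ X) Z
      + K.g (K.φ Y) (K.nabla X Z) := by
  have h := K.metric_compat X (K.φ Y) Z
  rw [K.nabla_phi X Y, K.g_sub_left, K.g_add_left, K.g_smul_left, K.g_smul_left,
    K.g_xi_left] at h
  linear_combination h

lemma Xcst : X K.cst = 0 := by
  have h := K.metric_compat X (K.φ K.ξ) K.ξ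
  have h1 : K.g (K.φ K.ξ) K.ξ = K.cst := by rw [K.g_xi_right, ← K.cst_def]
  have h2 : K.g (K.nabla X (K.φ K.ξ)) K.ξ = 0 := by
    rw [K.nabla_phi X K.ξ, K.g_sub_left, K.g_add_left, K.g_smul_left, K.g_smul_left,
      K.g_xi_xi, K.g_xi_right (K.φ X)]
    have h3 : K.g (K.φ (K.nabla X K.ξ)) K.ξ = 0 := by
      rw [K.g_xi_right, K.eta_phi, K.eta_nabla_xi, mul_zero]
    rw [h3, K.eta_xi]
    ring
  have h4 : K.g (K.φ K.ξ) (K.nabla X K.ξ) = 0 := by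
    rw [K.phixi, K.g_smul_left, K.g_symm, K.nabla_xi_g, mul_zero]
  rw [h1, h2, h4] at h
  simpa using h

end NablaXi
end KenmotsuManifold
namespace KenmotsuManifold

variable {n : ℕ} {C : Type*} [CommRing C] [Algebra ℝ C] (K : KenmotsuManifold n C)

section Curvature
variable (X Y Z W : Derivation ℝ C C) (f : C)

lemma Rm_skew : K.Rm X Y Z = -K.Rm Y X Z := by
  rw [Rm, Rm, show ⁅Y,X⁆ = -⁅X,Y⁆ by rw [← lie_skew Y X], K.nabla_neg_left]
  abel

lemma Rm_smul1 : K.Rm (f • X) Y Z = f • K.Rm X Y Z := by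
  rw [Rm, Rm, K.nabla_smul_left f X (K.nabla Y Z), K.nabla_smul_left f X Z,
    K.nabla_leibniz Y f (K.nabla X Z), bracket_smul_left, K.nabla_sub_left,
    K.nabla_smul_left, K.nabla_smul_left]
  module

lemma Rm_add1 : K.Rm (X + W) Y Z = K.Rm X Y Z + K.Rm W Y Z := by
  rw [Rm, Rm, Rm, K.nabla_add_left X W (K.nabla Y Z), K.nabla_add_left X W Z,
    K.nabla_add_right Y, add_lie, K.nabla_add_left]
  abel

lemma Rm_smul2 : K.Rm X (f • Y) Z = f • K.Rm X Y Z := by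
  rw [K.Rm_skew, K.Rm_smul1, K.Rm_skew X Y Z, smul_neg]

lemma Rm_add2 : K.Rm X (Y + W) Z = K.Rm X Y Z + K.Rm X W Z := by
  rw [K.Rm_skew, K.Rm_add1, K.Rm_skew Y X Z, K.Rm_skew W X Z]
  abel

lemma Rm_smul3 : K.Rm X Y (f • Z) = f • K.Rm X Y Z := by
  rw [Rm, Rm, K.nabla_leibniz Y f Z,
    K.nabla_add_right X, K.nabla_leibniz X (Y f) Z, K.nabla_leibniz X f (K.nabla Y Z),
    K.nabla_leibniz X f Z,
    K.nabla_add_right Y, K.nabla_leibniz Y (X f) Z, K.nabla_leibniz Y f (K.nabla X Z),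
    K.nabla_leibniz ⁅X,Y⁆ f Z, Derivation.commutator_apply]
  module

lemma Rm_add3 : K.Rm X Y (Z + W) = K.Rm X Y Z + K.Rm X Y W := by
  rw [Rm, Rm, Rm, K.nabla_add_right, K.nabla_add_right, K.nabla_add_right,
    K.nabla_add_right, K.nabla_add_right]
  abel

/-- `Rm X · Z` as a `C`-linear map -/
def RmL2 (X Z : Derivation ℝ C C) : Derivation ℝ C C →ₗ[C] Derivation ℝ C C where
  toFun Y := K.Rm X Y Z
  map_add' Y W := K.Rm_add2 X Y Z W
  map_smul' f Y := K.Rm_smul2 X Y Z f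

@[simp] lemma RmL2_apply : K.RmL2 X Z Y = K.Rm X Y Z := rfl

/-- `Rm X Y ·` as a `C`-linear map -/
def RmL3 (X Y : Derivation ℝ C C) : Derivation ℝ C C →ₗ[C] Derivation ℝ C C where
  toFun Z := K.Rm X Y Z
  map_add' Z W := K.Rm_add3 X Y Z W
  map_smul' f Z := K.Rm_smul3 X Y Z f

@[simp] lemma RmL3_apply : K.RmL3 X Y Z = K.Rm X Y Z := rfl

/-- `Rm · Y Z` as a `C`-linear map -/
def RmL1 (Y Z : Derivation ℝ C C) : Derivation ℝ C C →ₗ[C] Derivation ℝ C C where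
  toFun X := K.Rm X Y Z
  map_add' X W := K.Rm_add1 X Y Z W
  map_smul' f X := K.Rm_smul1 X Y Z f

@[simp] lemma RmL1_apply : K.RmL1 Y Z X = K.Rm X Y Z := rfl

lemma antisym34 : K.g (K.Rm X Y Z) W = -K.g (K.Rm X Y W) Z := by
  have r1 : K.g (K.Rm X Y Z) W = K.g (K.nabla X (K.nabla Y Z)) W
      - K.g (K.nabla Y (K.nabla X Z)) W - K.g (K.nabla ⁅X,Y⁆ Z) W := by
    rw [Rm, K.g_sub_left, K.g_sub_left]
  have r2 : K.g (K.Rm X Y W) Z = K.g Z (K.nabla X (K.nabla Y W))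
      - K.g Z (K.nabla Y (K.nabla X W)) - K.g Z (K.nabla ⁅X,Y⁆ W) := by
    rw [K.g_symm, Rm, K.g_sub_right, K.g_sub_right]
  have c1 := congrArg X (K.metric_compat Y Z W)
  rw [map_add] at c1
  have c2 := K.metric_compat X (K.nabla Y Z) W
  have c3 := K.metric_compat X Z (K.nabla Y W)
  have d1 := congrArg Y (K.metric_compat X Z W)
  rw [map_add] at d1
  have d2 := K.metric_compat Y (K.nabla X Z) W
  have d3 := K.metric_compat Y Z (K.nabla X W)
  have e1 := K.metric_compat ⁅X,Y⁆ Z W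
  have e0 : ⁅X,Y⁆ (K.g Z W) = X (Y (K.g Z W)) - Y (X (K.g Z W)) :=
    Derivation.commutator_apply (K.g Z W)
  linear_combination r1 + r2 - c1 - c2 - c3 + d1 + d2 + d3 + e1 - e0

lemma bianchi : K.Rm X Y Z + K.Rm Y Z X + K.Rm Z X Y = 0 := by
  have hA : K.nabla X ⁅Y,Z⁆ = K.nabla X (K.nabla Y Z) - K.nabla X (K.nabla Z Y) := by
    rw [← K.torsion_free Y Z, K.nabla_sub_right]
  have hB : K.nabla Y ⁅Z,X⁆ = K.nabla Y (K.nabla Z X) - K.nabla Y (K.nabla X Z) := by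
    rw [← K.torsion_free Z X, K.nabla_sub_right]
  have hC : K.nabla Z ⁅X,Y⁆ = K.nabla Z (K.nabla X Y) - K.nabla Z (K.nabla Y X) := by
    rw [← K.torsion_free X Y, K.nabla_sub_right]
  have ta := K.torsion_free X ⁅Y,Z⁆
  have tb := K.torsion_free Y ⁅Z,X⁆
  have tc := K.torsion_free Z ⁅X,Y⁆
  have j := lie_jacobi X Y Z
  rw [Rm, Rm, Rm]
  linear_combination (norm := module) -hA - hB - hC + ta + tb + tc + j

lemma antisym12g : K.g (K.Rm X Y Z) W = -K.g (K.Rm Y X Z) W := by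
  rw [K.Rm_skew, K.g_neg_left]

lemma bianchig : K.g (K.Rm X Y Z) W + K.g (K.Rm Y Z X) W + K.g (K.Rm Z X Y) W = 0 := by
  have := congrArg (fun V => K.g V W) (K.bianchi X Y Z)
  simpa [K.g_add_left, K.g_zero_left] using this

lemma pairsym : K.g (K.Rm X Y Z) W = K.g (K.Rm Z W X) Y := by
  have B1 := K.bianchig X Y Z W
  have B2 := K.bianchig Y Z W X
  have B3 := K.bianchig Z W X Y
  have B4 := K.bianchig W X Y Z
  have s1 := K.antisym34 Y Z X W
  have s2a := K.antisym12g Z X Y W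
  have s2b := K.antisym34 X Z Y W
  have s3 := K.antisym34 Z W Y X
  have s4a := K.antisym12g W Y Z X
  have s4b := K.antisym34 Y W Z X
  have s5 := K.antisym34 W X Z Y
  have s6 := K.antisym34 X Y W Z
  apply sub_eq_zero.mp
  apply half_zero
  linear_combination B1 + B2 - B3 - B4 - s1 - s2a + s2b - s3 - s4a + s4b + s5 + s6

end Curvature
end KenmotsuManifold
namespace KenmotsuManifold

variable {n : ℕ} {C : Type*} [CommRing C] [Algebra ℝ C] (K : KenmotsuManifold n C)

section RmXi
variable (X Y Z W : Derivation ℝ C C) (f : C)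

lemma Rmxi : K.Rm X Y K.ξ = K.η X • Y - K.η Y • X
    + (2*(K.cst * K.η Y)) • K.φ X - (2*(K.cst * K.η X)) • K.φ Y := by
  have a1 : K.nabla X (K.nabla Y K.ξ)
      = K.nabla X Y - (X (K.η Y) • K.ξ + K.η Y • K.nabla X K.ξ)
        - (X K.cst • K.φ Y + K.cst • K.nabla X (K.φ Y)) := by
    rw [K.nablaxi Y, K.nabla_sub_right, K.nabla_sub_right, K.nabla_leibniz, K.nabla_leibniz]
  rw [K.Xcst, K.X_eta, K.nablaxi X, K.nabla_phi X Y, zero_smul] at a1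
  have a2 : K.nabla Y (K.nabla X K.ξ)
      = K.nabla Y X - (Y (K.η X) • K.ξ + K.η X • K.nabla Y K.ξ)
        - (Y K.cst • K.φ X + K.cst • K.nabla Y (K.φ X)) := by
    rw [K.nablaxi X, K.nabla_sub_right, K.nabla_sub_right, K.nabla_leibniz, K.nabla_leibniz]
  rw [K.Xcst, K.X_eta, K.nablaxi Y, K.nabla_phi Y X, zero_smul] at a2
  have a3 : K.nabla (K.nabla X Y - K.nabla Y X) K.ξ
      = (K.nabla X Y - K.nabla Y X) - (K.η (K.nabla X Y) - K.η (K.nabla Y X)) • K.ξ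
        - K.cst • (K.φ (K.nabla X Y) - K.φ (K.nabla Y X)) := by
    rw [K.nablaxi (K.nabla X Y - K.nabla Y X), K.eta_sub, K.phi_sub]
  have hsym : (K.g X Y) • K.ξ = (K.g Y X) • K.ξ := by rw [K.g_symm]
  rw [Rm, ← K.torsion_free X Y]
  linear_combination (norm := module) a1 - a2 - a3 - hsym

lemma Id10h : K.Rm X Y (K.φ Z) = K.φ (K.Rm X Y Z)
    + K.g (K.φ Y) Z • X - K.g (K.φ X) Z • Y
    + (K.g Y Z - 2*(K.cst * K.g (K.φ Y) Z)) • K.φ X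
    - (K.g X Z - 2*(K.cst * K.g (K.φ X) Z)) • K.φ Y := by
  have b1 : K.nabla X (K.nabla Y (K.φ Z))
      = K.nabla X (K.φ (K.nabla Y Z))
        + (X (K.g (K.φ Y) Z) • K.ξ + K.g (K.φ Y) Z • K.nabla X K.ξ)
        - (X (K.η Z) • K.φ Y + K.η Z • K.nabla X (K.φ Y)) := by
    rw [K.nabla_phi Y Z, K.nabla_sub_right, K.nabla_add_right, K.nabla_leibniz,
      K.nabla_leibniz]
  rw [K.nabla_phi X (K.nabla Y Z), K.X_gphi X Y Z, K.X_eta X Z, K.nablaxi X,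
    K.nabla_phi X Y] at b1
  have b2 : K.nabla Y (K.nabla X (K.φ Z))
      = K.nabla Y (K.φ (K.nabla X Z))
        + (Y (K.g (K.φ X) Z) • K.ξ + K.g (K.φ X) Z • K.nabla Y K.ξ)
        - (Y (K.η Z) • K.φ X + K.η Z • K.nabla Y (K.φ X)) := by
    rw [K.nabla_phi X Z, K.nabla_sub_right, K.nabla_add_right, K.nabla_leibniz,
      K.nabla_leibniz]
  rw [K.nabla_phi Y (K.nabla X Z), K.X_gphi Y X Z, K.X_eta Y Z, K.nablaxi Y,
    K.nabla_phi Y X] at b2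
  have b3 : K.nabla (K.nabla X Y - K.nabla Y X) (K.φ Z)
      = K.φ (K.nabla (K.nabla X Y - K.nabla Y X) Z)
        + (K.g (K.φ (K.nabla X Y)) Z - K.g (K.φ (K.nabla Y X)) Z) • K.ξ
        - K.η Z • (K.φ (K.nabla X Y) - K.φ (K.nabla Y X)) := by
    rw [K.nabla_phi (K.nabla X Y - K.nabla Y X) Z, K.phi_sub, K.g_sub_left]
  have hphiR : K.φ (K.Rm X Y Z)
      = K.φ (K.nabla X (K.nabla Y Z)) - K.φ (K.nabla Y (K.nabla X Z))
        - K.φ (K.nabla (K.nabla X Y - K.nabla Y X) Z) := by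
    rw [Rm, ← K.torsion_free X Y, K.phi_sub, K.phi_sub]
  rw [Rm, ← K.torsion_free X Y, hphiR]
  linear_combination (norm := module) b1 - b2 - b3

end RmXi
end KenmotsuManifold
namespace KenmotsuManifold

variable {n : ℕ} {C : Type*} [CommRing C] [Algebra ℝ C] (K : KenmotsuManifold n C)

section Collapse
variable (X Y Z W : Derivation ℝ C C) (f : C)

lemma star2' : K.g X (K.φ Y) = 2*K.cst*K.η X*K.η Y - K.g (K.φ X) Y := by
  linear_combination K.star2 X Y

lemma etaRm : K.η (K.Rm X Y Z) = K.η Y * K.g X Z - K.η X * K.g Y Z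
    - 2*(K.cst * (K.η Y * K.g (K.φ X) Z)) + 2*(K.cst * (K.η X * K.g (K.φ Y) Z)) := by
  have h0 : K.η (K.Rm X Y Z) = -K.g (K.Rm X Y K.ξ) Z := by
    rw [K.eta_def, K.antisym34 X Y Z K.ξ, K.g_symm]
  have h := congrArg (fun V => K.g V Z) (K.Rmxi X Y)
  simp only [K.g_add_left, K.g_sub_left, K.g_smul_left] at h
  rw [h0, h]
  ring

lemma cstmaster : 2*(K.cst*(K.η X * K.g Y Z)) = 2*(K.cst*(K.η Y * K.g X Z)) := by
  have E3 := congrArg (fun V => K.g V K.ξ) (K.Id10h X Y Z)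
  simp only [K.g_add_left, K.g_sub_left, K.g_smul_left, K.g_xi_right] at E3
  rw [K.etaRm X Y (K.φ Z), K.eta_phi (K.Rm X Y Z), K.etaRm X Y Z, K.eta_phi X,
    K.eta_phi Y, K.star2' X Z, K.star2' Y Z, K.compat_phi X Z, K.compat_phi Y Z] at E3
  linear_combination E3

lemma cgrel : K.cst * K.g X Y = K.cst * (K.η X * K.η Y) := by
  have h := K.cstmaster K.ξ X Y
  rw [K.eta_xi, K.g_xi_left] at h
  have h2 : (K.cst * K.g X Y - K.cst * (K.η X * K.η Y))
      + (K.cst * K.g X Y - K.cst * (K.η X * K.η Y)) = 0 := by linear_combination h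
  have h3 := half_zero h2
  linear_combination h3

lemma cgphi : K.cst * K.g (K.φ X) Y = 0 := by
  have h := K.cgrel (K.φ X) Y
  rw [K.eta_phi] at h
  linear_combination h + K.η X * K.η Y * K.cst_sq

lemma cphi0 : K.cst • K.φ X = 0 := by
  apply K.g_nondeg
  intro W
  rw [K.g_smul_left, K.cgphi]

lemma Rmxi' : K.Rm X Y K.ξ = K.η X • Y - K.η Y • X := by
  rw [K.Rmxi]
  have h1 : (2*(K.cst * K.η Y)) • K.φ X = 0 := by
    rw [show 2*(K.cst * K.η Y) = (2*K.η Y)*K.cst by ring, mul_smul, K.cphi0, smul_zero]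
  have h2 : (2*(K.cst * K.η X)) • K.φ Y = 0 := by
    rw [show 2*(K.cst * K.η X) = (2*K.η X)*K.cst by ring, mul_smul, K.cphi0, smul_zero]
  rw [h1, h2, add_zero, sub_zero]

lemma Id10 : K.Rm X Y (K.φ Z) = K.φ (K.Rm X Y Z)
    + K.g (K.φ Y) Z • X - K.g (K.φ X) Z • Y
    + K.g Y Z • K.φ X - K.g X Z • K.φ Y := by
  rw [K.Id10h, K.cgphi Y Z, K.cgphi X Z]
  module

lemma gRxi : K.g (K.Rm X Y K.ξ) W = K.η X * K.g Y W - K.η Y * K.g X W := by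
  have h := congrArg (fun V => K.g V W) (K.Rmxi' X Y)
  simp only [K.g_sub_left, K.g_smul_left] at h
  exact h

lemma etaRm' : K.η (K.Rm X Y Z) = K.η Y * K.g X Z - K.η X * K.g Y Z := by
  have h0 : K.η (K.Rm X Y Z) = -K.g (K.Rm X Y K.ξ) Z := by
    rw [K.eta_def, K.antisym34 X Y Z K.ξ, K.g_symm]
  rw [h0, K.gRxi]
  ring

lemma gphiphi : K.g (K.φ (K.φ X)) W = -K.g X W + K.η X * K.η W := by
  rw [K.phi_phi, K.g_add_left, K.g_neg_left, K.g_smul_left, K.g_xi_left]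

end Collapse
end KenmotsuManifold
namespace KenmotsuManifold

variable {n : ℕ} {C : Type*} [CommRing C] [Algebra ℝ C] (K : KenmotsuManifold n C)

section Sums
variable (X Y Z W : Derivation ℝ C C) (f : C)

lemma sum_eta_F (F : Derivation ℝ C C →ₗ[C] C) :
    ∑ i, K.η (K.e i) * F (K.e i) = F K.ξ := by
  have h := K.sum_coeff K.ξ F
  simpa [K.g_xi_left] using h

lemma sum_ones : ∑ i, K.g (K.e i) (K.e i) = 2*(n:C)+1 := by
  have : ∀ i ∈ Finset.univ, K.g (K.e i) (K.e i) = (1:C) := fun i _ => by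
    rw [K.g_frame]; simp
  rw [Finset.sum_congr rfl this, Finset.sum_const, Finset.card_univ, Fintype.card_fin,
    nsmul_eq_mul, mul_one]
  push_cast
  ring

lemma sum_eta2 : ∑ i, K.η (K.e i) * K.η (K.e i) = 1 := by
  have h := K.sum_eta_F K.etaL
  simpa [K.eta_xi] using h

lemma sum_tau : ∑ i, K.g (K.φ (K.e i)) (K.e i) = K.cst := by
  have per : ∀ i ∈ Finset.univ, K.g (K.φ (K.e i)) (K.e i)
      = K.cst * (K.η (K.e i) * K.η (K.e i)) := by
    intro i _
    have h := K.star2 (K.e i) (K.e i)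
    have h2 := K.g_symm (K.e i) (K.φ (K.e i))
    have h3 : (K.g (K.φ (K.e i)) (K.e i) - K.cst * (K.η (K.e i) * K.η (K.e i)))
        + (K.g (K.φ (K.e i)) (K.e i) - K.cst * (K.η (K.e i) * K.η (K.e i))) = 0 := by
      linear_combination h - h2
    have := half_zero h3
    linear_combination this
  rw [Finset.sum_congr rfl per, ← Finset.mul_sum, K.sum_eta2, mul_one]

lemma sum_tau' : ∑ i, K.g (K.e i) (K.φ (K.e i)) = K.cst := by
  have per : ∀ i ∈ Finset.univ, K.g (K.e i) (K.φ (K.e i))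
      = K.g (K.φ (K.e i)) (K.e i) := fun i _ => K.g_symm _ _
  rw [Finset.sum_congr rfl per, K.sum_tau]

lemma sum_phiphi : ∑ i, K.g (K.φ (K.e i)) (K.φ (K.e i)) = 2*(n:C) := by
  have per : ∀ i ∈ Finset.univ, K.g (K.φ (K.e i)) (K.φ (K.e i))
      = K.g (K.e i) (K.e i) - K.η (K.e i) * K.η (K.e i) := fun i _ => K.compat_phi _ _
  rw [Finset.sum_congr rfl per, Finset.sum_sub_distrib, K.sum_ones, K.sum_eta2]
  ring

lemma sum_gphiphi : ∑ i, K.g (K.φ (K.φ (K.e i))) (K.e i) = -(2*(n:C)) := by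
  have per : ∀ i ∈ Finset.univ, K.g (K.φ (K.φ (K.e i))) (K.e i)
      = -K.g (K.e i) (K.e i) + K.η (K.e i) * K.η (K.e i) := fun i _ => K.gphiphi _ _
  rw [Finset.sum_congr rfl per, Finset.sum_add_distrib, Finset.sum_neg_distrib,
    K.sum_ones, K.sum_eta2]
  ring

/-- move `φ` across the trace -/
lemma sum_phi_swap (G : Derivation ℝ C C →ₗ[C] Derivation ℝ C C) :
    ∑ i, K.g (K.φ (G (K.e i))) (K.e i)
      = 2*(K.cst * K.η (G K.ξ)) - ∑ i, K.g (G (K.e i)) (K.φ (K.e i)) := by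
  have per : ∀ i ∈ Finset.univ, K.g (K.φ (G (K.e i))) (K.e i)
      = 2*(K.η (K.e i) * (K.cst * K.η (G (K.e i)))) - K.g (G (K.e i)) (K.φ (K.e i)) := by
    intro i _
    linear_combination K.star2 (G (K.e i)) (K.e i)
  rw [Finset.sum_congr rfl per, Finset.sum_sub_distrib, ← Finset.mul_sum]
  have hs := K.sum_eta_F ((K.cst • K.etaL).comp G)
  simp only [LinearMap.comp_apply, LinearMap.smul_apply, etaL_apply, smul_eq_mul] at hs
  rw [hs]

end Sums
end KenmotsuManifold
namespace KenmotsuManifold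

variable {n : ℕ} {C : Type*} [CommRing C] [Algebra ℝ C] (K : KenmotsuManifold n C)

section Steps
variable (X Y : Derivation ℝ C C)

lemma stepA : ∑ i, K.g (K.Rm X (K.φ Y) (K.φ (K.e i))) (K.e i)
    = ∑ i, K.g (K.φ (K.Rm X (K.φ Y) (K.e i))) (K.e i) := by
  apply Finset.sum_congr rfl
  intro i _
  rw [K.Id10 X (K.φ Y) (K.e i), K.g_sub_left, K.g_add_left, K.g_sub_left, K.g_add_left,
    K.g_smul_left, K.g_smul_left, K.g_smul_left, K.g_smul_left]
  ring

lemma stepB : ∑ i, K.g (K.φ (K.Rm X (K.φ Y) (K.e i))) (K.e i)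
    = -∑ i, K.g (K.φ (K.Rm (K.φ Y) (K.e i) X)) (K.e i)
      - ∑ i, K.g (K.φ (K.Rm (K.e i) X (K.φ Y))) (K.e i) := by
  have per : ∀ i ∈ Finset.univ, K.g (K.φ (K.Rm X (K.φ Y) (K.e i))) (K.e i)
      = -K.g (K.φ (K.Rm (K.φ Y) (K.e i) X)) (K.e i)
        - K.g (K.φ (K.Rm (K.e i) X (K.φ Y))) (K.e i) := by
    intro i _
    have hb := congrArg (fun V => K.g (K.φ V) (K.e i))
      (K.bianchi X (K.φ Y) (K.e i))
    simp only [K.phi_add, K.g_add_left, K.phi_zero, K.g_zero_left] at hb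
    linear_combination hb
  rw [Finset.sum_congr rfl per, Finset.sum_sub_distrib, Finset.sum_neg_distrib]

lemma corr1 : 2*(K.cst * K.η (K.Rm (K.φ Y) K.ξ X)) = 0 := by
  rw [K.etaRm' (K.φ Y) K.ξ X, K.eta_phi, K.eta_xi, K.g_xi_left]
  linear_combination 2 * K.cgphi Y X - 2 * K.η Y * K.η X * K.cst_sq

lemma corr2 : 2*(K.cst * K.η (K.Rm K.ξ X (K.φ Y))) = 0 := by
  rw [K.etaRm' K.ξ X (K.φ Y), K.eta_xi, K.g_xi_left, K.eta_phi, K.star2' X Y]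
  linear_combination 2 * K.cgphi X Y - 2 * K.η X * K.η Y * K.cst_sq

lemma stepC : ∑ i, K.g (K.Rm X (K.φ Y) (K.φ (K.e i))) (K.e i)
    = ∑ i, K.g (K.Rm (K.φ Y) (K.e i) X) (K.φ (K.e i))
      + ∑ i, K.g (K.Rm (K.e i) X (K.φ Y)) (K.φ (K.e i)) := by
  rw [K.stepA, K.stepB]
  have h1 := K.sum_phi_swap (K.RmL2 (K.φ Y) X)
  simp only [RmL2_apply] at h1
  have h2 := K.sum_phi_swap (K.RmL1 X (K.φ Y))
  simp only [RmL1_apply] at h2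
  rw [h1, h2, K.corr1 X Y, K.corr2 X Y]
  ring

end Steps
end KenmotsuManifold
namespace KenmotsuManifold

variable {n : ℕ} {C : Type*} [CommRing C] [Algebra ℝ C] (K : KenmotsuManifold n C)

section Traces
variable (X Y : Derivation ℝ C C)

lemma U2val : ∑ i, K.g (K.Rm (K.e i) X (K.φ Y)) (K.φ (K.e i))
    = K.S X Y + (2*(n:C)-1)*K.g X Y + K.η X * K.η Y := by
  have per : ∀ i ∈ Finset.univ, K.g (K.Rm (K.e i) X (K.φ Y)) (K.φ (K.e i))
      = K.g (K.Rm (K.e i) X Y) (K.e i)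
        - K.η (K.e i) * K.η (K.Rm (K.e i) X Y)
        + K.g (K.φ X) Y * K.g (K.e i) (K.φ (K.e i))
        - 2*(K.cst*(K.η Y * (K.η (K.e i) * K.g X (K.φ (K.e i)))))
        + K.g (K.φ Y) (K.e i) * K.g X (K.φ (K.e i))
        + K.g X Y * K.g (K.φ (K.e i)) (K.φ (K.e i))
        - K.g Y (K.e i) * K.g (K.φ X) (K.φ (K.e i)) := by
    intro i _
    have h0 := congrArg (fun V => K.g V (K.φ (K.e i))) (K.Id10 (K.e i) X Y)
    simp only [K.g_add_left, K.g_sub_left, K.g_smul_left] at h0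
    have c1 := K.compat_phi (K.Rm (K.e i) X Y) (K.e i)
    have s3 := K.star2' (K.e i) Y
    have sy := K.g_symm (K.φ Y) (K.e i)
    have sy2 := K.g_symm Y (K.e i)
    linear_combination h0 + c1 - K.g X (K.φ (K.e i)) * s3 - K.g X (K.φ (K.e i)) * sy
      + K.g (K.φ X) (K.φ (K.e i)) * sy2
  rw [Finset.sum_congr rfl per]
  simp only [Finset.sum_sub_distrib, Finset.sum_add_distrib]
  have hB : ∑ i, K.η (K.e i) * K.η (K.Rm (K.e i) X Y) = K.η (K.Rm K.ξ X Y) := by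
    have h := K.sum_eta_F (K.etaL.comp (K.RmL1 X Y)); simpa using h
  have hC : ∑ i, K.g (K.φ X) Y * K.g (K.e i) (K.φ (K.e i)) = K.g (K.φ X) Y * K.cst := by
    rw [← Finset.mul_sum, K.sum_tau']
  have hD0 : ∑ i, K.η (K.e i) * K.g X (K.φ (K.e i)) = K.cst * K.η X := by
    have h := K.sum_eta_F ((K.gL X).comp K.phiL)
    simp only [LinearMap.comp_apply, gL_apply, phiL_apply] at h
    rw [h, K.phixi, K.g_smul_right, K.g_xi_right]
  have hD : ∑ i, 2*(K.cst*(K.η Y * (K.η (K.e i) * K.g X (K.φ (K.e i)))))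
      = 2*(K.cst*(K.η Y * (K.cst * K.η X))) := by
    rw [← Finset.mul_sum, ← Finset.mul_sum, ← Finset.mul_sum, hD0]
  have hE : ∑ i, K.g (K.φ Y) (K.e i) * K.g X (K.φ (K.e i)) = K.g X (K.φ (K.φ Y)) := by
    have h := K.sum_coeff (K.φ Y) ((K.gL X).comp K.phiL); simpa using h
  have hF : ∑ i, K.g X Y * K.g (K.φ (K.e i)) (K.φ (K.e i)) = K.g X Y * (2*(n:C)) := by
    rw [← Finset.mul_sum, K.sum_phiphi]
  have hG : ∑ i, K.g Y (K.e i) * K.g (K.φ X) (K.φ (K.e i)) = K.g (K.φ X) (K.φ Y) := by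
    have h := K.sum_coeff Y ((K.gL (K.φ X)).comp K.phiL); simpa using h
  rw [hB, hC, hD, hE, hF, hG,
    show ∑ i, K.g (K.Rm (K.e i) X Y) (K.e i) = K.S X Y from rfl,
    K.etaRm' K.ξ X Y, K.eta_xi, K.g_xi_left]
  linear_combination K.g_symm X (K.φ (K.φ Y)) + K.gphiphi Y X - K.compat_phi X Y
    + K.cgphi X Y - 2*K.η Y*K.η X*K.cst_sq + K.g_symm X Y

lemma Wval : ∑ i, K.g (K.Rm X (K.φ (K.e i)) Y) (K.φ (K.e i))
    = -K.S X Y - K.g X Y + K.η X * K.η Y := by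
  have per : ∀ i ∈ Finset.univ, K.g (K.Rm X (K.φ (K.e i)) Y) (K.φ (K.e i))
      = ∑ j, K.g (K.φ (K.e i)) (K.e j) * K.g (K.Rm X (K.e j) Y) (K.φ (K.e i)) := by
    intro i _
    have h1 := congrArg (K.RmL2 X Y) (K.frame_span (K.φ (K.e i)))
    rw [map_sum] at h1
    simp only [map_smul, RmL2_apply] at h1
    calc K.g (K.Rm X (K.φ (K.e i)) Y) (K.φ (K.e i))
        = K.g (∑ j, K.g (K.φ (K.e i)) (K.e j) • K.Rm X (K.e j) Y) (K.φ (K.e i)) := by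
          rw [← h1]
      _ = ∑ j, K.g (K.φ (K.e i)) (K.e j) * K.g (K.Rm X (K.e j) Y) (K.φ (K.e i)) := by
          rw [K.g_sum_left]
          exact Finset.sum_congr rfl fun j _ => K.g_smul_left _ _ _
  rw [Finset.sum_congr rfl per, Finset.sum_comm]
  have inner : ∀ j ∈ Finset.univ,
      (∑ i, K.g (K.φ (K.e i)) (K.e j) * K.g (K.Rm X (K.e j) Y) (K.φ (K.e i)))
      = K.g (K.Rm X (K.e j) Y) (K.e j)
        - K.η (K.e j) * K.g (K.Rm X (K.e j) Y) K.ξ := by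
    intro j _
    have hA : ∀ i, K.g (K.φ (K.e i)) (K.e j)
        = K.g ((2*(K.cst*K.η (K.e j))) • K.ξ - K.φ (K.e j)) (K.e i) := by
      intro i
      rw [K.g_sub_left, K.g_smul_left, K.g_xi_left]
      linear_combination K.star2 (K.e i) (K.e j) - K.g_symm (K.e i) (K.φ (K.e j))
    have step : (∑ i, K.g (K.φ (K.e i)) (K.e j) * K.g (K.Rm X (K.e j) Y) (K.φ (K.e i)))
        = ∑ i, K.g ((2*(K.cst*K.η (K.e j))) • K.ξ - K.φ (K.e j)) (K.e i)
            * (((K.gL (K.Rm X (K.e j) Y)).comp K.phiL) (K.e i)) := by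
      apply Finset.sum_congr rfl
      intro i _
      rw [hA i]
      simp only [LinearMap.comp_apply, gL_apply, phiL_apply]
    rw [step, K.sum_coeff]
    simp only [LinearMap.comp_apply, gL_apply, phiL_apply]
    rw [K.phi_sub, K.phi_smul, K.phixi, K.phi_phi, smul_smul,
      show 2*(K.cst*K.η (K.e j)) * K.cst = (2*K.η (K.e j))*(K.cst*K.cst) by ring,
      K.cst_sq, mul_zero, zero_smul, zero_sub, K.g_neg_right, K.g_add_right,
      K.g_neg_right, K.g_smul_right, K.g_xi_right]
    ring
  rw [Finset.sum_congr rfl inner, Finset.sum_sub_distrib]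
  have h1 : ∀ j ∈ Finset.univ, K.g (K.Rm X (K.e j) Y) (K.e j)
      = -K.g (K.Rm (K.e j) X Y) (K.e j) := fun j _ => K.antisym12g X (K.e j) Y (K.e j)
  have h2 : ∀ j ∈ Finset.univ, K.η (K.e j) * K.g (K.Rm X (K.e j) Y) K.ξ
      = K.η (K.e j) * K.η (K.Rm X (K.e j) Y) := fun j _ => by rw [K.g_xi_right]
  rw [Finset.sum_congr rfl h1, Finset.sum_congr rfl h2, Finset.sum_neg_distrib]
  have h3 : ∑ j, K.η (K.e j) * K.η (K.Rm X (K.e j) Y) = K.η (K.Rm X K.ξ Y) := by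
    have h := K.sum_eta_F (K.etaL.comp (K.RmL2 X Y)); simpa using h
  rw [h3, show ∑ j, K.g (K.Rm (K.e j) X Y) (K.e j) = K.S X Y from rfl,
    K.etaRm' X K.ξ Y, K.eta_xi, K.g_xi_left]
  ring

lemma U1val : ∑ i, K.g (K.Rm (K.φ Y) (K.e i) X) (K.φ (K.e i))
    = K.S X Y + (2*(n:C)-1)*K.g X Y + K.η X * K.η Y := by
  have per : ∀ i ∈ Finset.univ, K.g (K.Rm (K.φ Y) (K.e i) X) (K.φ (K.e i))
      = K.g (K.φ (K.Rm X (K.φ (K.e i)) Y)) (K.e i)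
        - K.g Y (K.e i) * K.g X (K.e i)
        + K.η Y * (K.η (K.e i) * K.g X (K.e i))
        - K.g (K.φ X) Y * K.g (K.φ (K.e i)) (K.e i)
        + 2*(K.cst*(K.η Y * (K.η (K.e i) * K.g (K.φ X) (K.e i))))
        - K.g (K.φ Y) (K.e i) * K.g (K.φ X) (K.e i)
        - K.g X Y * K.g (K.φ (K.φ (K.e i))) (K.e i) := by
    intro i _
    have hp := K.pairsym (K.φ Y) (K.e i) X (K.φ (K.e i))
    have h0 := congrArg (fun V => K.g V (K.e i)) (K.Id10 X (K.φ (K.e i)) Y)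
    simp only [K.g_add_left, K.g_sub_left, K.g_smul_left] at h0
    have c2 := K.gphiphi (K.e i) Y
    have s3 := K.star2' (K.e i) Y
    have sy := K.g_symm (K.φ Y) (K.e i)
    have sy2 := K.g_symm Y (K.e i)
    linear_combination hp + h0 + K.g X (K.e i) * c2 + K.g (K.φ X) (K.e i) * s3
      + K.g (K.φ X) (K.e i) * sy + K.g X (K.e i) * sy2
  rw [Finset.sum_congr rfl per]
  simp only [Finset.sum_sub_distrib, Finset.sum_add_distrib]
  have h1 := K.sum_phi_swap ((K.RmL2 X Y).comp K.phiL)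
  simp only [LinearMap.comp_apply, phiL_apply, RmL2_apply] at h1
  have hcorr : 2*(K.cst * K.η (K.Rm X (K.φ K.ξ) Y)) = 0 := by
    rw [K.phixi, K.Rm_smul2, K.eta_smul,
      show 2*(K.cst * (K.cst * K.η (K.Rm X K.ξ Y)))
        = 2*K.η (K.Rm X K.ξ Y)*(K.cst*K.cst) by ring, K.cst_sq, mul_zero]
  rw [hcorr, zero_sub] at h1
  rw [h1, K.Wval X Y]
  have hb : ∑ i, K.g Y (K.e i) * K.g X (K.e i) = K.g Y X := K.sum_gg Y X
  have hb2 : ∑ i, K.η Y * (K.η (K.e i) * K.g X (K.e i)) = K.η Y * K.η X := by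
    rw [← Finset.mul_sum]
    have h := K.sum_eta_F (K.gL X)
    simp only [gL_apply] at h
    rw [h, K.g_xi_right]
  have hc : ∑ i, K.g (K.φ X) Y * K.g (K.φ (K.e i)) (K.e i) = K.g (K.φ X) Y * K.cst := by
    rw [← Finset.mul_sum, K.sum_tau]
  have hd0 : ∑ i, K.η (K.e i) * K.g (K.φ X) (K.e i) = K.cst * K.η X := by
    have h := K.sum_eta_F (K.gL (K.φ X))
    simp only [gL_apply] at h
    rw [h, K.g_xi_right, K.eta_phi]
  have hd : ∑ i, 2*(K.cst*(K.η Y * (K.η (K.e i) * K.g (K.φ X) (K.e i))))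
      = 2*(K.cst*(K.η Y * (K.cst * K.η X))) := by
    rw [← Finset.mul_sum, ← Finset.mul_sum, ← Finset.mul_sum, hd0]
  have he : ∑ i, K.g (K.φ Y) (K.e i) * K.g (K.φ X) (K.e i) = K.g (K.φ Y) (K.φ X) :=
    K.sum_gg (K.φ Y) (K.φ X)
  have hf : ∑ i, K.g X Y * K.g (K.φ (K.φ (K.e i))) (K.e i) = K.g X Y * (-(2*(n:C))) := by
    rw [← Finset.mul_sum, K.sum_gphiphi]
  rw [hb, hb2, hc, hd, he, hf, K.compat_phi Y X]
  linear_combination 2*K.g_symm X Y - K.cgphi X Y + 2*K.η X*K.η Y*K.cst_sq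

end Traces
end KenmotsuManifold
namespace KenmotsuManifold

variable {n : ℕ} {C : Type*} [CommRing C] [Algebra ℝ C] (K : KenmotsuManifold n C)

lemma Tval (X Y : Derivation ℝ C C) :
    ∑ i, K.g (K.Rm X (K.φ Y) (K.φ (K.e i))) (K.e i)
    = (K.S X Y + (2*(n:C)-1)*K.g X Y + K.η X * K.η Y)
      + (K.S X Y + (2*(n:C)-1)*K.g X Y + K.η X * K.η Y) := by
  rw [K.stepC, K.U1val, K.U2val]

end KenmotsuManifold
open KenmotsuManifold in
/-- On a Kenmotsu manifold of dimension `2n+1`, the `*`-Ricci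
tensor is `S* = S + (2n-1) g + η ⊗ η`. -/
theorem stmt2 {n : ℕ} {C : Type*} [CommRing C] [Algebra ℝ C]
    (K : KenmotsuManifold n C) (X Y : Derivation ℝ C C) :
    K.Sstar X Y = K.S X Y + (2 * (n : ℝ) - 1) • K.g X Y + K.η X * K.η Y := by
  rw [Sstar, K.Tval X Y]
  set E := K.S X Y + (2*(n:C)-1)*K.g X Y + K.η X * K.η Y with hEdef
  have hE : E + E = (2:ℝ) • E := (two_smul ℝ E).symm
  have h2 : ((2:ℝ)⁻¹ * 2) = 1 := by norm_num
  rw [hE, smul_smul, h2, one_smul, hEdef]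
  have hc : (2 * (n:ℝ) - 1) • K.g X Y = (2*(n:C)-1) * K.g X Y := by
    rw [Algebra.smul_def, map_sub, map_mul, map_one, map_natCast, map_ofNat]
  rw [hc]
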